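/- If M is a bornologically torsionfree bornological V-module, then the natural map M → M ⊗ F into its rationalization is a bornological embedding, and consequently any product of bornologically torsionfree bornological V-modules is bornologically torsionfree. -/

import Mathlib

/-- A bornology on a `V`-module `M`, specified by its bounded subsets:
finite sets are bounded, bounded sets are closed under subsets and finite
unions, and every bounded subset is contained in a bounded `V`-submodule. -/
structure ModuleBornology (V M : Type) [CommRing V] [AddCommGroup M] [Module V M] :
    Type where
  IsBounded : Set M → Prop
  isBounded_subset : ∀ {S T : Set M}, S ⊆ T → IsBounded T → IsBounded S
  isBounded_union : ∀ {S T : Set M}, IsBounded S → IsBounded T → IsBounded (S ∪ T)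
  isBounded_of_finite : ∀ {S : Set M}, S.Finite → IsBounded S
  exists_bounded_submodule : ∀ {S : Set M}, IsBounded S →
    ∃ N : Submodule V M, IsBounded (N : Set M) ∧ S ⊆ (N : Set M)

/-- A bornological `V`-module is *complete* (w.r.t. the uniformiser `π`) if every
bounded subset is contained in a bounded, `π`-adically complete `V`-submodule. -/
def ModuleBornology.IsCompleteWrt {V M : Type} [CommRing V] [AddCommGroup M] [Module V M]
    (π : V) (B : ModuleBornology V M) : Prop :=
  ∀ {S : Set M}, B.IsBounded S → ∃ N : Submodule V M,
    B.IsBounded (N : Set M) ∧ S ⊆ (N : Set M) ∧ IsAdicComplete (Ideal.span {π}) N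

/-- A bornological `V`-module is *bornologically torsionfree* if multiplication by `π`
is injective and `π⁻¹ · S = {x | π • x ∈ S}` is bounded for every bounded `S`. -/
def ModuleBornology.IsTorsionfreeWrt {V M : Type} [CommRing V] [AddCommGroup M] [Module V M]
    (π : V) (B : ModuleBornology V M) : Prop :=
  Function.Injective (fun x : M => π • x) ∧
    ∀ {S : Set M}, B.IsBounded S → B.IsBounded {x : M | π • x ∈ S}

/-- A `V`-linear map is *bounded* if it maps bounded subsets to bounded subsets. -/
def IsBoundedLinMap {V M N : Type} [CommRing V] [AddCommGroup M] [Module V M]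
    [AddCommGroup N] [Module V N] (BM : ModuleBornology V M) (BN : ModuleBornology V N)
    (f : M →ₗ[V] N) : Prop :=
  ∀ {S : Set M}, BM.IsBounded S → BN.IsBounded (f '' S)

/-- A *bornological embedding*: an injective map which is a bornological isomorphism
onto its image (with the subspace bornology); equivalently, `S` is bounded iff its
image is bounded. -/
def IsBornologicalEmbedding {V M N : Type} [CommRing V] [AddCommGroup M] [Module V M]
    [AddCommGroup N] [Module V N] (BM : ModuleBornology V M) (BN : ModuleBornology V N)
    (f : M →ₗ[V] N) : Prop :=
  Function.Injective f ∧ ∀ S : Set M, BM.IsBounded S ↔ BN.IsBounded (f '' S)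

open scoped TensorProduct


open scoped TensorProduct in
lemma aux_inj {V : Type} [CommRing V] [IsDomain V] [IsDiscreteValuationRing V]
    (π : V) (hπ : Irreducible π) (M : Type) [AddCommGroup M] [Module V M]
    (hinj : Function.Injective (fun x : M => π • x)) :
    Function.Injective ((TensorProduct.mk V M (FractionRing V)).flip 1) := by
  have hpown : ∀ (n : ℕ) (x : M), (π ^ n) • x = 0 → x = 0 := by
    intro n
    induction n with
    | zero => intro x hx; simpa using hx
    | succ n ih =>
      intro x hx
      have : π • ((π ^ n) • x) = 0 := by
        rw [smul_smul, ← pow_succ']; exact hx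
      exact ih x (hinj (by simpa using this))
  set g : M →ₗ[V] (FractionRing V) ⊗[V] M := TensorProduct.mk V (FractionRing V) M 1 with hg
  have hbc : IsBaseChange (FractionRing V) g := TensorProduct.isBaseChange V M (FractionRing V)
  have hloc : IsLocalizedModule (nonZeroDivisors V) g :=
    (isLocalizedModule_iff_isBaseChange (nonZeroDivisors V) (FractionRing V) g).mpr hbc
  have hker : ∀ x : M, ((TensorProduct.mk V M (FractionRing V)).flip 1) x = 0 → x = 0 := by
    intro x hx
    have hgx : g x = 0 := by
      have : (TensorProduct.comm V M (FractionRing V)) (((TensorProduct.mk V M (FractionRing V)).flip 1) x) = g x := by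
        simp [hg, TensorProduct.mk, TensorProduct.comm_tmul]
      rw [← this, hx, map_zero]
    obtain ⟨s, hs⟩ := (IsLocalizedModule.eq_zero_iff (nonZeroDivisors V) g).mp hgx
    have hs0 : (s : V) ≠ 0 := nonZeroDivisors.coe_ne_zero s
    obtain ⟨n, u, hu⟩ := IsDiscreteValuationRing.eq_unit_mul_pow_irreducible hs0 hπ
    have : (u : V) • ((π ^ n) • x) = 0 := by
      rw [smul_smul, ← hu]; exact hs
    have h2 : (π ^ n) • x = 0 := by
      have := congrArg (fun y => (↑u⁻¹ : V) • y) this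
      simpa [smul_smul] using this
    exact hpown n x h2
  intro x y hxy
  have : ((TensorProduct.mk V M (FractionRing V)).flip 1) (x - y) = 0 := by
    rw [map_sub, hxy, sub_self]
  exact sub_eq_zero.mp (hker _ this)

/-- Let `V` be a complete discrete valuation ring with uniformiser `π`
and fraction field `F`.  If `M` is a bornologically torsionfree bornological `V`-module,
then the natural map `M → M ⊗ F` into its rationalization is a bornological embedding
(where a subset of `M ⊗ F` is bounded iff some `πⁿ`-multiple of it lies in the image of a
bounded subset of `M`), and consequently any product of bornologically torsionfree
bornological `V`-modules (with the product bornology) is bornologically torsionfree. -/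
theorem stmt1 {V : Type} [CommRing V] [IsDomain V] [IsDiscreteValuationRing V]
    (π : V) (hπ : Irreducible π) :
    -- the natural map `M → M ⊗ F` is a bornological embedding
    (∀ (M : Type) [AddCommGroup M] [Module V M] (BM : ModuleBornology V M),
      BM.IsTorsionfreeWrt π →
      ∀ (BF : ModuleBornology V (M ⊗[V] FractionRing V)),
        (∀ T : Set (M ⊗[V] FractionRing V), BF.IsBounded T ↔
          ∃ S : Set M, BM.IsBounded S ∧ ∃ n : ℕ, ∀ y ∈ T, ∃ x ∈ S,
            (π ^ n) • y = ((TensorProduct.mk V M (FractionRing V)).flip 1) x) →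
        IsBornologicalEmbedding BM BF ((TensorProduct.mk V M (FractionRing V)).flip 1)) ∧
    -- consequently, products of torsionfree modules are torsionfree
    (∀ (ι : Type) (M : ι → Type) [∀ i, AddCommGroup (M i)] [∀ i, Module V (M i)]
      (BM : ∀ i, ModuleBornology V (M i)),
      (∀ i, (BM i).IsTorsionfreeWrt π) →
      ∀ (BP : ModuleBornology V (∀ i, M i)),
        (∀ S : Set (∀ i, M i),
          BP.IsBounded S ↔ ∀ i, (BM i).IsBounded ((fun x => x i) '' S)) →
        BP.IsTorsionfreeWrt π) := by
  constructor
  · intro M _ _ BM htf BF hBF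
    have hinj : Function.Injective ((TensorProduct.mk V M (FractionRing V)).flip 1) :=
      aux_inj π hπ M htf.1
    refine ⟨hinj, fun S => ⟨fun hS => ?_, fun hS => ?_⟩⟩
    · rw [hBF]
      refine ⟨S, hS, 0, fun y hy => ?_⟩
      obtain ⟨x, hx, rfl⟩ := hy
      exact ⟨x, hx, by simp⟩
    · rw [hBF] at hS
      obtain ⟨S', hS', n, hn⟩ := hS
      have hbdd : ∀ (m : ℕ) (T : Set M), BM.IsBounded T →
          BM.IsBounded {x : M | (π ^ m) • x ∈ T} := by
        intro m
        induction m with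
        | zero => intro T hT; refine BM.isBounded_subset ?_ hT; intro x hx; simpa using hx
        | succ m ih =>
          intro T hT
          have h1 := htf.2 (ih T hT)
          refine BM.isBounded_subset ?_ h1
          intro x hx
          simp only [Set.mem_setOf_eq] at hx ⊢
          rw [smul_smul, ← pow_succ]
          exact hx
      refine BM.isBounded_subset ?_ (hbdd n S' hS')
      intro s hs
      obtain ⟨x, hx, hx2⟩ := hn _ ⟨s, hs, rfl⟩
      have : ((TensorProduct.mk V M (FractionRing V)).flip 1) ((π ^ n) • s)
          = ((TensorProduct.mk V M (FractionRing V)).flip 1) x := by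
        rw [map_smul]; exact hx2
      have := hinj this
      simpa [Set.mem_setOf_eq, this] using hx
  · intro ι M _ _ BM htf BP hBP
    constructor
    · intro x y hxy
      funext i
      exact (htf i).1 (congrFun hxy i)
    · intro S hS
      rw [hBP]
      intro i
      have hSi := (hBP S).mp hS i
      refine (BM i).isBounded_subset ?_ ((htf i).2 hSi)
      rintro _ ⟨x, hx, rfl⟩
      exact ⟨π • x, hx, rfl⟩
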